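/- Let α be a unital partial action of a group G on a commutative ring T and let δ^n : C^n(G,α,T) → C^{n+1}(G,α,T) be the partial coboundary homomorphism. Then for every f ∈ C^n(G,α,T) and all g_1,…,g_{n+2} ∈ G one has (δ^{n+1}(δ^n f))(g_1,…,g_{n+2}) = 1_{g_1}·1_{g_1 g_2}⋯1_{g_1⋯g_{n+2}}, i.e. the composite of two consecutive coboundary maps is trivial. -/

import Mathlib

/-- A unital partial action of a group `G` on a commutative ring `T` (ideals generated by
idempotents `e g`, partial ring isomorphisms `act g : D_{g⁻¹} → D_g`). -/
structure UnitalPartialAction (G : Type*) (T : Type*) [Group G] [CommRing T] where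
  e : G → T
  idem : ∀ g, IsIdempotentElem (e g)
  e_one : e 1 = 1
  act : G → T → T
  act_one : ∀ t, act 1 t = t
  act_add : ∀ g x y, act g (x + y) = act g x + act g y
  act_mul : ∀ g x y, act g (x * y) = act g x * act g y
  act_proj : ∀ g x, act g x = act g (x * e g⁻¹)
  act_e : ∀ g, act g (e g⁻¹) = e g
  mem_range : ∀ g x, act g x * e g = act g x
  act_range : ∀ g h, act g (e g⁻¹ * e h) = e g * e (g * h)
  act_inj : ∀ g x y, x * e g⁻¹ = x → y * e g⁻¹ = y → act g x = act g y → x = y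
  act_surj : ∀ g y, y * e g = y → ∃ x, x * e g⁻¹ = x ∧ act g x = y
  act_comp : ∀ g h x, x * (e h⁻¹ * e (g * h)⁻¹) = x → act g (act h x) = act (g * h) x

variable {G T : Type*} [Group G] [CommRing T]

/-- The idempotent `1_{g₁}·1_{g₁g₂}⋯1_{g₁⋯g_n}`. -/
def cochainUnit (pa : UnitalPartialAction G T) (n : ℕ) (gs : Fin n → G) : T :=
  ∏ i : Fin n, pa.e (((List.ofFn gs).take (i + 1)).prod)

/-- An `n`-cochain `f : Gⁿ → T`: `f gs` is invertible in the ideal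
`T·1_{g₁}·1_{g₁g₂}⋯1_{g₁⋯g_n}`. -/
def IsCochain (pa : UnitalPartialAction G T) (n : ℕ) (f : (Fin n → G) → T) : Prop :=
  ∀ gs : Fin n → G, f gs * cochainUnit pa n gs = f gs ∧
    ∃ u : T, u * cochainUnit pa n gs = u ∧ f gs * u = cochainUnit pa n gs

/-- Merging the `i`-th and `(i+1)`-st entries (`0`-indexed) of `(g₁,…,g_{n+1})` into their
product, producing an `n`-tuple. -/
def merge {n : ℕ} (i : Fin n) (gs : Fin (n + 1) → G) : Fin n → G := fun j =>
  if (j : ℕ) < (i : ℕ) then gs j.castSucc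
  else if (j : ℕ) = (i : ℕ) then gs j.castSucc * gs j.succ
  else gs j.succ

/-- The partial coboundary `δⁿ f` of an `n`-cochain `f` with (pointwise, in-ideal) inverse
`finv`:
`(δⁿf)(g₁,…,g_{n+1}) = α_{g₁}(f(g₂,…,g_{n+1})1_{g₁⁻¹}) ·
  ∏_{i=1}^{n} f(g₁,…,g_i g_{i+1},…,g_{n+1})^{(-1)^i} · f(g₁,…,g_n)^{(-1)^{n+1}}`,
inverses being taken in the corresponding ideals (so odd-indexed factors use `finv`). -/
def coboundary (pa : UnitalPartialAction G T) (n : ℕ)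
    (f finv : (Fin n → G) → T) : (Fin (n + 1) → G) → T := fun gs =>
  pa.act (gs 0) (f (Fin.tail gs) * pa.e (gs 0)⁻¹) *
    (∏ i : Fin n, (if (i : ℕ) % 2 = 0 then finv else f) (merge i gs)) *
    (if n % 2 = 0 then finv else f) (Fin.init gs)

section Aux

variable (pa : UnitalPartialAction G T)

/-- Prefix product of the first `j` entries. -/
def pp {m : ℕ} (gs : Fin m → G) (j : ℕ) : G := ((List.ofFn gs).take j).prod

lemma pp_zero {m : ℕ} (gs : Fin m → G) : pp gs 0 = 1 := rfl

lemma pp_succ {m : ℕ} (gs : Fin m → G) {j : ℕ} (h : j < m) :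
    pp gs (j + 1) = pp gs j * gs ⟨j, h⟩ := by
  have h' : j < (List.ofFn gs).length := by simpa using h
  simpa [pp] using List.prod_take_succ (List.ofFn gs) j h'

lemma pp_tail {m : ℕ} (gs : Fin (m + 1) → G) (j : ℕ) :
    gs 0 * pp (Fin.tail gs) j = pp gs (j + 1) := by
  simp only [pp, List.ofFn_succ, List.take_succ_cons, List.prod_cons]
  rfl

lemma cochainUnit_eq {m : ℕ} (gs : Fin m → G) :
    cochainUnit pa m gs = ∏ i : Fin m, pa.e (pp gs (i + 1)) := rfl

/-- The `k`-th face of an `(n+1)`-tuple: `face 0 = tail`, `face k = merge (k-1)` for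
`1 ≤ k ≤ n`, `face k = init` for `k ≥ n+1`. -/
def face {n : ℕ} (k : ℕ) (gs : Fin (n + 1) → G) : Fin n → G :=
  if h0 : k = 0 then Fin.tail gs
  else if h : k ≤ n then merge ⟨k - 1, by omega⟩ gs else Fin.init gs

lemma face_zero {n : ℕ} (gs : Fin (n + 1) → G) : face 0 gs = Fin.tail gs := rfl

lemma face_merge {n : ℕ} (i : Fin n) (gs : Fin (n + 1) → G) :
    face (i + 1) gs = merge i gs := by
  have h1 : (i : ℕ) + 1 ≤ n := i.isLt
  simp only [face, dif_neg (Nat.succ_ne_zero _), dif_pos h1, Nat.add_sub_cancel]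

lemma face_init {n : ℕ} (k : ℕ) (hk : n + 1 ≤ k) (gs : Fin (n + 1) → G) :
    face k gs = Fin.init gs := by
  have h0 : k ≠ 0 := by omega
  have h1 : ¬ k ≤ n := by omega
  simp only [face, dif_neg h0, dif_neg h1]

lemma face_apply {n : ℕ} (k : ℕ) (gs : Fin (n + 1) → G) (j : Fin n) :
    face k gs j =
      if (j : ℕ) + 1 < k then gs ⟨j, by omega⟩
      else if (j : ℕ) + 1 = k then gs ⟨j, by omega⟩ * gs ⟨(j : ℕ) + 1, by omega⟩
      else gs ⟨(j : ℕ) + 1, by omega⟩ := by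
  rcases Nat.eq_zero_or_pos k with hk | hk
  · subst hk
    rw [face_zero, if_neg (by omega), if_neg (by omega)]
    rfl
  · by_cases h : k ≤ n
    · have h0 : k ≠ 0 := by omega
      simp only [face, dif_neg h0, dif_pos h, merge]
      have e1 : (j : ℕ) < k - 1 ↔ (j : ℕ) + 1 < k := by omega
      have e2 : (j : ℕ) = k - 1 ↔ (j : ℕ) + 1 = k := by omega
      rcases lt_trichotomy ((j : ℕ) + 1) k with h' | h' | h'
      · rw [if_pos (e1.mpr h'), if_pos h']
        rfl
      · rw [if_neg (by omega), if_pos (e2.mpr h'), if_neg (by omega), if_pos h']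
        rfl
      · rw [if_neg (by omega), if_neg (by omega), if_neg (by omega), if_neg (by omega)]
        rfl
    · rw [face_init k (by omega) gs]
      rw [if_pos (by omega : (j : ℕ) + 1 < k)]
      rfl

/-- The simplicial identity `d_k ∘ d_{l+1} = d_l ∘ d_k` for `k ≤ l`. -/
lemma face_face {n : ℕ} {k l : ℕ} (hkl : k ≤ l) (gs : Fin (n + 2) → G) :
    face k (face (l + 1) gs) = face l (face k gs) := by
  funext j
  have key : ∀ (a b : ℕ) (ha : a < n + 2) (hb : b < n + 2), a = b →
      gs ⟨a, ha⟩ = gs ⟨b, hb⟩ := by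
    intro a b ha hb h
    subst h; rfl
  have mk2 : ∀ {x y z w : G}, x = z → y = w → x * y = z * w := by
    intro x y z w h1 h2; rw [h1, h2]
  simp only [face_apply]
  split_ifs
  all_goals try omega
  all_goals simp only [mul_assoc]


/-- The `k`-th factor of the coboundary `δⁿ(f)(gs)`, `k ∈ [0, n+1]`. -/
def cofactor {n : ℕ} (f finv : (Fin n → G) → T) (gs : Fin (n + 1) → G) (k : ℕ) : T :=
  if k = 0 then pa.act (gs 0) (f (face 0 gs) * pa.e (gs 0)⁻¹)
  else (if k % 2 = 1 then finv else f) (face k gs)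

lemma coboundary_eq_prod {n : ℕ} (f finv : (Fin n → G) → T) (gs : Fin (n + 1) → G) :
    coboundary pa n f finv gs = ∏ k : Fin (n + 2), cofactor pa f finv gs k := by
  rw [Fin.prod_univ_succ, Fin.prod_univ_castSucc]
  have h0 : cofactor pa f finv gs ((0 : Fin (n + 2)) : ℕ) =
      pa.act (gs 0) (f (Fin.tail gs) * pa.e (gs 0)⁻¹) := by
    simp [cofactor, face_zero]
  have hlast : cofactor pa f finv gs ((Fin.last n).succ : ℕ) =
      (if n % 2 = 0 then finv else f) (Fin.init gs) := by
    have : ((Fin.last n).succ : ℕ) = n + 1 := rfl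
    rw [cofactor, this, if_neg (Nat.succ_ne_zero n), face_init (n + 1) le_rfl gs]
    congr 1
    rcases Nat.mod_two_eq_zero_or_one n with he | ho
    · rw [if_pos (by omega), if_pos he]
    · rw [if_neg (by omega), if_neg (by omega)]
  have hmid : ∀ i : Fin n, cofactor pa f finv gs ((i.castSucc.succ : Fin (n + 2)) : ℕ) =
      (if (i : ℕ) % 2 = 0 then finv else f) (merge i gs) := by
    intro i
    have hv : ((i.castSucc.succ : Fin (n + 2)) : ℕ) = (i : ℕ) + 1 := rfl
    rw [cofactor, hv, if_neg (Nat.succ_ne_zero _), face_merge]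
    congr 1
    rcases Nat.mod_two_eq_zero_or_one (i : ℕ) with he | ho
    · rw [if_pos (by omega), if_pos he]
    · rw [if_neg (by omega), if_neg (by omega)]
  rw [h0, hlast]
  unfold coboundary
  rw [mul_assoc]
  congr 1
  congr 1
  exact Finset.prod_congr rfl fun i _ => (hmid i).symm

lemma e_mul_self (g : G) : pa.e g * pa.e g = pa.e g := pa.idem g

/-- `act g (x·1_{g⁻¹}) · act g (y·1_{g⁻¹}) = act g (x·y·1_{g⁻¹})`. -/
lemma act_mul_in (g : G) (x y : T) :
    pa.act g (x * pa.e g⁻¹) * pa.act g (y * pa.e g⁻¹) = pa.act g (x * y * pa.e g⁻¹) := by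
  rw [← pa.act_mul]
  congr 1
  rw [mul_mul_mul_comm, e_mul_self]

/-- Key composition: `α_a(α_b(x·1_{b⁻¹})·1_{a⁻¹}) = α_{ab}(x·1_{b⁻¹}·1_{(ab)⁻¹})`. -/
lemma act_act (a b : G) (x : T) :
    pa.act a (pa.act b (x * pa.e b⁻¹) * pa.e a⁻¹) =
      pa.act (a * b) (x * pa.e b⁻¹ * pa.e (a * b)⁻¹) := by
  have h1 : pa.act b (x * pa.e b⁻¹) * pa.e a⁻¹ =
      pa.act b (x * pa.e b⁻¹ * pa.e (a * b)⁻¹) := by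
    have hb : pa.act b (x * pa.e b⁻¹) * pa.e a⁻¹ =
        pa.act b (x * pa.e b⁻¹) * (pa.e b * pa.e a⁻¹) := by
      rw [← mul_assoc, pa.mem_range]
    rw [hb]
    have hr : pa.e b * pa.e a⁻¹ = pa.act b (pa.e b⁻¹ * pa.e (a * b)⁻¹) := by
      have := pa.act_range b (b⁻¹ * a⁻¹)
      rw [mul_inv_cancel_left] at this
      rw [mul_inv_rev]
      exact this.symm
    rw [hr, ← pa.act_mul]
    congr 1
    rw [show x * pa.e b⁻¹ * (pa.e b⁻¹ * pa.e (a * b)⁻¹) =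
      x * (pa.e b⁻¹ * pa.e b⁻¹) * pa.e (a * b)⁻¹ from by ring, e_mul_self]
  rw [h1]
  refine pa.act_comp a b _ ?_
  rw [show x * pa.e b⁻¹ * pa.e (a * b)⁻¹ * (pa.e b⁻¹ * pa.e (a * b)⁻¹) =
    x * (pa.e b⁻¹ * pa.e b⁻¹) * (pa.e (a * b)⁻¹ * pa.e (a * b)⁻¹) from by ring,
    e_mul_self, e_mul_self]

/-- `α_g` of a product of idempotents `1_{h_i}` cut down to `D_{g⁻¹}`. -/
lemma act_prod_e {m : ℕ} (g : G) (h : Fin m → G) :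
    pa.act g ((∏ i : Fin m, pa.e (h i)) * pa.e g⁻¹) =
      pa.e g * ∏ i : Fin m, pa.e (g * h i) := by
  induction m with
  | zero => simpa using pa.act_e g
  | succ m ih =>
    rw [Fin.prod_univ_succ, Fin.prod_univ_succ (f := fun i => pa.e (g * h i))]
    have split : pa.e (h 0) * (∏ i : Fin m, pa.e (h i.succ)) * pa.e g⁻¹ =
        (pa.e g⁻¹ * pa.e (h 0)) * ((∏ i : Fin m, pa.e (h i.succ)) * pa.e g⁻¹) := by
      rw [show (pa.e g⁻¹ * pa.e (h 0)) * ((∏ i : Fin m, pa.e (h i.succ)) * pa.e g⁻¹) =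
        pa.e (h 0) * (∏ i : Fin m, pa.e (h i.succ)) * (pa.e g⁻¹ * pa.e g⁻¹) from by ring,
        e_mul_self]
    rw [split, pa.act_mul, pa.act_range, ih (fun i => h i.succ)]
    rw [show pa.e g * pa.e (g * h 0) * (pa.e g * ∏ i : Fin m, pa.e (g * h i.succ)) =
      (pa.e g * pa.e g) * (pa.e (g * h 0) * ∏ i : Fin m, pa.e (g * h i.succ)) from by ring,
      e_mul_self]

lemma pp_face {m : ℕ} (gs : Fin (m + 1) → G) {k : ℕ} (hk : 1 ≤ k) :
    ∀ j ≤ m, pp (face k gs) j = if j < k then pp gs j else pp gs (j + 1) := by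
  intro j
  induction j with
  | zero => intro _; rw [if_pos (by omega)]; rfl
  | succ j ih =>
    intro hj
    have hj' : j < m := by omega
    rw [pp_succ (face k gs) hj', ih (by omega), face_apply]
    simp only [Fin.val_mk]
    by_cases h1 : j + 1 < k
    · rw [if_pos (by omega), if_pos h1, if_pos (by omega), ← pp_succ]
    · by_cases h2 : j + 1 = k
      · rw [if_pos (by omega), if_neg (by omega), if_pos h2, if_neg (by omega),
          ← mul_assoc, ← pp_succ gs (by omega : j < m + 1), ← pp_succ]
      · rw [if_neg (by omega), if_neg h1, if_neg h2, if_neg (by omega),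
          ← pp_succ gs (by omega : j + 1 < m + 1)]

/-- Push `α_g(·1_{g⁻¹})` through a nonempty product. -/
lemma act_prod_in {m : ℕ} (g : G) (x : Fin (m + 1) → T) :
    pa.act g ((∏ i : Fin (m + 1), x i) * pa.e g⁻¹) =
      ∏ i : Fin (m + 1), pa.act g (x i * pa.e g⁻¹) := by
  induction m with
  | zero => simp
  | succ m ih =>
    rw [Fin.prod_univ_succ, Fin.prod_univ_succ (f := fun i => pa.act g (x i * pa.e g⁻¹)),
      ← ih (fun i => x i.succ), act_mul_in, mul_assoc]

/-- The `(k,l)` factor in the expansion of `δ^{n+1}(δ^n f)(gs)`. -/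
def dfactor {n : ℕ} (f finv : (Fin n → G) → T) (gs : Fin (n + 2) → G) (k l : ℕ) : T :=
  if k = 0 then pa.act (gs 0) (cofactor pa f finv (Fin.tail gs) l * pa.e (gs 0)⁻¹)
  else if k % 2 = 1 then cofactor pa finv f (face k gs) l
  else cofactor pa f finv (face k gs) l

lemma dd_expand {n : ℕ} (f finv : (Fin n → G) → T) (gs : Fin (n + 2) → G) :
    coboundary pa (n + 1) (coboundary pa n f finv) (coboundary pa n finv f) gs =
      ∏ k : Fin (n + 3), ∏ l : Fin (n + 2), dfactor pa f finv gs k l := by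
  rw [coboundary_eq_prod]
  refine Finset.prod_congr rfl fun k _ => ?_
  by_cases hk : (k : ℕ) = 0
  · rw [cofactor, if_pos hk, hk, face_zero]
    rw [coboundary_eq_prod pa f finv (Fin.tail gs), act_prod_in]
    refine Finset.prod_congr rfl fun l _ => ?_
    rw [dfactor, if_pos rfl]
  · rcases Nat.mod_two_eq_zero_or_one (k : ℕ) with he | ho
    · rw [cofactor, if_neg hk, if_neg (by omega)]
      rw [coboundary_eq_prod pa f finv (face (k : ℕ) gs)]
      refine Finset.prod_congr rfl fun l _ => ?_
      rw [dfactor, if_neg hk, if_neg (by omega)]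
    · rw [cofactor, if_neg hk, if_pos ho]
      rw [coboundary_eq_prod pa finv f (face (k : ℕ) gs)]
      refine Finset.prod_congr rfl fun l _ => ?_
      rw [dfactor, if_neg hk, if_pos ho]

lemma abs_e {n : ℕ} (gs : Fin (n + 2) → G) {m : ℕ} (h1 : 1 ≤ m) (h2 : m ≤ n + 2) :
    pa.e (pp gs m) * cochainUnit pa (n + 2) gs = cochainUnit pa (n + 2) gs := by
  rw [cochainUnit_eq]
  set i0 : Fin (n + 2) := ⟨m - 1, by omega⟩ with hi0
  have hv : (i0 : ℕ) + 1 = m := by simp [hi0]; omega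
  rw [← Finset.mul_prod_erase Finset.univ _ (Finset.mem_univ i0), ← mul_assoc, hv,
    e_mul_self]

lemma abs_prod {n : ℕ} (gs : Fin (n + 2) → G) {ι : Type*} (s : Finset ι) (x : ι → T)
    (h : ∀ i ∈ s, x i * cochainUnit pa (n + 2) gs = cochainUnit pa (n + 2) gs) :
    (∏ i ∈ s, x i) * cochainUnit pa (n + 2) gs = cochainUnit pa (n + 2) gs := by
  classical
  induction s using Finset.induction_on with
  | empty => simp
  | insert _ _ hni ih =>
    rename_i a s
    rw [Finset.prod_insert hni, mul_assoc, ih (fun i hi => h i (Finset.mem_insert_of_mem hi)),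
      h a (Finset.mem_insert_self a s)]

lemma abs_mul' {n : ℕ} (gs : Fin (n + 2) → G) {x y : T}
    (hx : x * cochainUnit pa (n + 2) gs = cochainUnit pa (n + 2) gs)
    (hy : y * cochainUnit pa (n + 2) gs = cochainUnit pa (n + 2) gs) :
    (x * y) * cochainUnit pa (n + 2) gs = cochainUnit pa (n + 2) gs := by
  rw [mul_assoc, hy, hx]

/-- Absorption for the unit of a double face: all its prefix products are prefix
products of `gs`. -/
lemma abs_unit_face {n : ℕ} (gs : Fin (n + 2) → G) {k l : ℕ} (hk : 1 ≤ k) (hkl : k ≤ l)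
    (hl : l ≤ n + 1) :
    cochainUnit pa n (face l (face k gs)) * cochainUnit pa (n + 2) gs =
      cochainUnit pa (n + 2) gs := by
  rw [cochainUnit_eq]
  refine abs_prod pa gs _ _ fun i _ => ?_
  have h1 : pp (face l (face k gs)) ((i : ℕ) + 1) =
      if (i : ℕ) + 1 < l then pp (face k gs) ((i : ℕ) + 1) else pp (face k gs) ((i : ℕ) + 2) :=
    pp_face (face k gs) (by omega) _ (by omega)
  have h2 : ∀ j ≤ n + 1, pp (face k gs) j = if j < k then pp gs j else pp gs (j + 1) :=
    pp_face gs hk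
  by_cases hc : (i : ℕ) + 1 < l
  · rw [h1, if_pos hc, h2 _ (by omega)]
    split_ifs
    · exact abs_e pa gs (by omega) (by omega)
    · exact abs_e pa gs (by omega) (by omega)
  · rw [h1, if_neg hc, h2 _ (by omega)]
    split_ifs
    · exact abs_e pa gs (by omega) (by omega)
    · exact abs_e pa gs (by omega) (by omega)

lemma pair_kl {n : ℕ} (f finv : (Fin n → G) → T)
    (hmul : ∀ gs, f gs * finv gs = cochainUnit pa n gs)
    (gs : Fin (n + 2) → G) {k l : ℕ} (hk : 1 ≤ k) (hkl : k ≤ l) (hl : l ≤ n + 1) :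
    dfactor pa f finv gs k l * dfactor pa f finv gs (l + 1) k *
        cochainUnit pa (n + 2) gs = cochainUnit pa (n + 2) gs := by
  have hu : face k (face (l + 1) gs) = face l (face k gs) := face_face hkl gs
  have hd1 : dfactor pa f finv gs k l =
      (if (k + l) % 2 = 0 then f else finv) (face l (face k gs)) := by
    rw [dfactor, if_neg (by omega : ¬ k = 0)]
    rcases Nat.mod_two_eq_zero_or_one k with hk2 | hk2 <;>
      rcases Nat.mod_two_eq_zero_or_one l with hl2 | hl2
    · rw [if_neg (by omega), cofactor, if_neg (by omega), if_neg (by omega), if_pos (by omega)]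
    · rw [if_neg (by omega), cofactor, if_neg (by omega), if_pos (by omega), if_neg (by omega)]
    · rw [if_pos (by omega), cofactor, if_neg (by omega), if_neg (by omega), if_neg (by omega)]
    · rw [if_pos (by omega), cofactor, if_neg (by omega), if_pos (by omega), if_pos (by omega)]
  have hd2 : dfactor pa f finv gs (l + 1) k =
      (if (k + l) % 2 = 0 then finv else f) (face l (face k gs)) := by
    rw [dfactor, if_neg (by omega : ¬ l + 1 = 0), ← hu]
    rcases Nat.mod_two_eq_zero_or_one k with hk2 | hk2 <;>
      rcases Nat.mod_two_eq_zero_or_one l with hl2 | hl2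
    · rw [if_pos (by omega), cofactor, if_neg (by omega), if_neg (by omega), if_pos (by omega)]
    · rw [if_neg (by omega), cofactor, if_neg (by omega), if_neg (by omega), if_neg (by omega)]
    · rw [if_pos (by omega), cofactor, if_neg (by omega), if_pos (by omega), if_neg (by omega)]
    · rw [if_neg (by omega), cofactor, if_neg (by omega), if_pos (by omega), if_pos (by omega)]
  rw [hd1, hd2]
  have hcu : (if (k + l) % 2 = 0 then f else finv) (face l (face k gs)) *
      (if (k + l) % 2 = 0 then finv else f) (face l (face k gs)) =
      cochainUnit pa n (face l (face k gs)) := by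
    split_ifs
    · exact hmul _
    · rw [mul_comm]; exact hmul _
  rw [hcu]
  exact abs_unit_face pa gs hk hkl hl

lemma pair_0l {n : ℕ} (f finv : (Fin n → G) → T)
    (hmul : ∀ gs, f gs * finv gs = cochainUnit pa n gs)
    (gs : Fin (n + 2) → G) {l : ℕ} (hl1 : 1 ≤ l) (hl : l ≤ n + 1) :
    dfactor pa f finv gs 0 l * dfactor pa f finv gs (l + 1) 0 *
        cochainUnit pa (n + 2) gs = cochainUnit pa (n + 2) gs := by
  have hd1 : dfactor pa f finv gs 0 l =
      pa.act (gs 0) ((if l % 2 = 1 then finv else f) (face l (Fin.tail gs)) *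
        pa.e (gs 0)⁻¹) := by
    rw [dfactor, if_pos rfl, cofactor, if_neg (by omega)]
  have hc : face (l + 1) gs 0 = gs 0 := by
    rw [face_apply, if_pos (by simp only [Fin.val_zero]; omega)]
    exact congrArg gs (Fin.ext (by simp))
  have hu : face 0 (face (l + 1) gs) = face l (Fin.tail gs) := by
    rw [face_face (Nat.zero_le l) gs, face_zero]
  have hd2 : dfactor pa f finv gs (l + 1) 0 =
      pa.act (gs 0) ((if l % 2 = 1 then f else finv) (face l (Fin.tail gs)) *
        pa.e (gs 0)⁻¹) := by
    rw [dfactor, if_neg (by omega)]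
    rcases Nat.mod_two_eq_zero_or_one l with hl2 | hl2
    · rw [if_pos (by omega), cofactor, if_pos rfl, hc, hu, if_neg (by omega)]
    · rw [if_neg (by omega), cofactor, if_pos rfl, hc, hu, if_pos (by omega)]
  rw [hd1, hd2, act_mul_in]
  have hcu : (if l % 2 = 1 then finv else f) (face l (Fin.tail gs)) *
      (if l % 2 = 1 then f else finv) (face l (Fin.tail gs)) =
      cochainUnit pa n (face l (Fin.tail gs)) := by
    split_ifs
    · rw [mul_comm]; exact hmul _
    · exact hmul _
  rw [hcu, cochainUnit_eq, act_prod_e]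
  refine abs_mul' pa gs ?_ (abs_prod pa gs _ _ fun i _ => ?_)
  · have h1 : pp gs 1 = gs 0 := by
      rw [pp_succ gs (by omega : 0 < n + 2), pp_zero, one_mul]
      exact congrArg gs (Fin.ext (by simp))
    rw [← h1]
    exact abs_e pa gs (by omega) (by omega)
  · have hw : pp (face l (Fin.tail gs)) ((i : ℕ) + 1) =
        if (i : ℕ) + 1 < l then pp (Fin.tail gs) ((i : ℕ) + 1)
        else pp (Fin.tail gs) ((i : ℕ) + 1 + 1) :=
      pp_face (Fin.tail gs) hl1 _ (by omega)
    rw [hw]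
    split_ifs
    · rw [pp_tail]
      exact abs_e pa gs (by omega) (by omega)
    · rw [pp_tail]
      exact abs_e pa gs (by omega) (by omega)

lemma pair_00 {n : ℕ} (f finv : (Fin n → G) → T)
    (hmul : ∀ gs, f gs * finv gs = cochainUnit pa n gs)
    (gs : Fin (n + 2) → G) :
    dfactor pa f finv gs 0 0 * dfactor pa f finv gs 1 0 = cochainUnit pa (n + 2) gs := by
  set a := gs 0 with ha
  set b := Fin.tail gs 0 with hb
  set u := face 0 (Fin.tail gs) with hudef
  have hd1 : dfactor pa f finv gs 0 0 =
      pa.act a (pa.act b (f u * pa.e b⁻¹) * pa.e a⁻¹) := by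
    rw [dfactor, if_pos rfl, cofactor, if_pos rfl]
  have hc : face 1 gs 0 = a * b := by
    rw [face_apply, if_neg (by simp), if_pos (by simp)]
    have e1 : (⟨(↑(0 : Fin (n + 1)) : ℕ), by omega⟩ : Fin (n + 2)) = 0 := Fin.ext (by simp)
    have e2 : (⟨(↑(0 : Fin (n + 1)) : ℕ) + 1, by omega⟩ : Fin (n + 2)) =
        (0 : Fin (n + 1)).succ := Fin.ext (by simp)
    rw [e1, e2, ha, hb]
    rfl
  have hu : face 0 (face 1 gs) = u := by
    have h := face_face (le_refl 0) gs
    rw [show (0 : ℕ) + 1 = 1 from rfl] at h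
    rw [h, face_zero, face_zero, hudef, face_zero]
  have hd2 : dfactor pa f finv gs 1 0 =
      pa.act (a * b) (finv u * pa.e (a * b)⁻¹) := by
    rw [dfactor, if_neg one_ne_zero, if_pos rfl, cofactor, if_pos rfl, hc, hu]
  rw [hd1, hd2, act_act, act_mul_in]
  have hstep : f u * pa.e b⁻¹ * finv u = cochainUnit pa n u * pa.e b⁻¹ := by
    rw [show f u * pa.e b⁻¹ * finv u = f u * finv u * pa.e b⁻¹ from by ring, hmul u]
  rw [hstep]
  have hprod : cochainUnit pa n u * pa.e b⁻¹ =
      ∏ i : Fin (n + 1),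
        pa.e ((Fin.cons b⁻¹ (fun i : Fin n => pp u ((i : ℕ) + 1)) : Fin (n + 1) → G) i) := by
    rw [Fin.prod_univ_succ, Fin.cons_zero, cochainUnit_eq, mul_comm]
    simp [Fin.cons_succ]
  rw [hprod, act_prod_e, Fin.prod_univ_succ, Fin.cons_zero]
  simp only [Fin.cons_succ, mul_inv_cancel_right]
  have hppi : ∀ j : ℕ, a * b * pp u j = pp gs (j + 2) := by
    intro j
    rw [hudef, face_zero, mul_assoc, hb, pp_tail (Fin.tail gs) j, ha, pp_tail gs (j + 1)]
  have h1 : pp gs 1 = a := by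
    rw [pp_succ gs (by omega : 0 < n + 2), pp_zero, one_mul, ha]
    exact congrArg gs (Fin.ext (by simp))
  have h2 : pp gs 2 = a * b := by
    rw [pp_succ gs (by omega : 1 < n + 2), h1, hb]
    congr 1
  rw [cochainUnit_eq, Fin.prod_univ_succ, Fin.prod_univ_succ]
  have hh1 : pa.e (pp gs ((↑(0 : Fin (n + 2)) : ℕ) + 1)) = pa.e a := by
    rw [show ((↑(0 : Fin (n + 2)) : ℕ) + 1) = 1 from by simp, h1]
  have hh2 : pa.e (pp gs ((↑((0 : Fin (n + 1)).succ) : ℕ) + 1)) = pa.e (a * b) := by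
    rw [show ((↑((0 : Fin (n + 1)).succ) : ℕ) + 1) = 2 from by simp, h2]
  rw [hh1, hh2, mul_left_comm]
  congr 2
  refine Finset.prod_congr rfl fun i _ => ?_
  rw [hppi]
  congr 1

lemma pairing {n : ℕ} (f finv : (Fin n → G) → T) (gs : Fin (n + 2) → G) :
    (∏ k : Fin (n + 3), ∏ l : Fin (n + 2), dfactor pa f finv gs k l) =
      ∏ p ∈ Finset.univ.filter
          (fun p : Fin (n + 3) × Fin (n + 2) => (p.1 : ℕ) ≤ (p.2 : ℕ)),
        (dfactor pa f finv gs p.1 p.2 * dfactor pa f finv gs ((p.2 : ℕ) + 1) p.1) := by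
  classical
  rw [← Finset.prod_product', Finset.univ_product_univ]
  rw [← Finset.prod_filter_mul_prod_filter_not Finset.univ
    (fun p : Fin (n + 3) × Fin (n + 2) => (p.1 : ℕ) ≤ (p.2 : ℕ))]
  rw [Finset.prod_mul_distrib]
  congr 1
  refine Finset.prod_bij' (i := fun p _ => ((⟨(p.2 : ℕ), by omega⟩ : Fin (n + 3)),
      (⟨min ((p.1 : ℕ) - 1) (n + 1), by omega⟩ : Fin (n + 2))))
    (j := fun p _ => ((⟨min ((p.2 : ℕ) + 1) (n + 2), by omega⟩ : Fin (n + 3)),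
      (⟨min (p.1 : ℕ) (n + 1), by omega⟩ : Fin (n + 2)))) ?_ ?_ ?_ ?_ ?_
  all_goals intro p hp
  all_goals simp only [Finset.mem_filter, Finset.mem_univ, true_and, not_le,
    Fin.val_mk] at hp ⊢
  all_goals have h1 := p.1.isLt
  all_goals have h2 := p.2.isLt
  case _ => omega
  case _ => omega
  case _ =>
      exact Prod.ext (Fin.ext (by first | omega | (simp only [Fin.val_mk]; omega)))
        (Fin.ext (by first | omega | (simp only [Fin.val_mk]; omega)))
  case _ =>
      exact Prod.ext (Fin.ext (by first | omega | (simp only [Fin.val_mk]; omega)))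
        (Fin.ext (by first | omega | (simp only [Fin.val_mk]; omega)))
  case _ =>
      rw [show ((↑p.1 - 1) ⊓ (n + 1) + 1) = (↑p.1 : ℕ) from by omega]

end Aux

/-- The composite of two consecutive partial coboundary homomorphisms is
trivial: for every `n`-cochain `f` (with inverse cochain `finv`),
`(δ^{n+1}(δⁿ f))(g₁,…,g_{n+2}) = 1_{g₁}·1_{g₁g₂}⋯1_{g₁⋯g_{n+2}}`.
(The inverse of the `(n+1)`-cochain `δⁿ f` in `C^{n+1}(G,α,T)` is `δⁿ finv`.) -/
theorem stmt5 (pa : UnitalPartialAction G T) (n : ℕ) (f finv : (Fin n → G) → T)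
    (hf : IsCochain pa n f) (hfinv : IsCochain pa n finv)
    (hmul : ∀ gs, f gs * finv gs = cochainUnit pa n gs) :
    ∀ gs : Fin (n + 2) → G,
      coboundary pa (n + 1) (coboundary pa n f finv) (coboundary pa n finv f) gs =
        cochainUnit pa (n + 2) gs := by

  intro gs
  classical
  rw [dd_expand, pairing]
  have h00 : ((0 : Fin (n + 3)), (0 : Fin (n + 2))) ∈ Finset.univ.filter
      (fun p : Fin (n + 3) × Fin (n + 2) => (p.1 : ℕ) ≤ (p.2 : ℕ)) := by
    simp
  rw [← Finset.mul_prod_erase _ _ h00]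
  have hv00 : dfactor pa f finv gs ((0 : Fin (n + 3)) : ℕ) ((0 : Fin (n + 2)) : ℕ) *
      dfactor pa f finv gs (((0 : Fin (n + 2)) : ℕ) + 1) ((0 : Fin (n + 3)) : ℕ) =
      cochainUnit pa (n + 2) gs := by
    simp only [Fin.val_zero, zero_add]
    exact pair_00 pa f finv hmul gs
  rw [hv00]
  have habs : (∏ p ∈ (Finset.univ.filter
        (fun p : Fin (n + 3) × Fin (n + 2) => (p.1 : ℕ) ≤ (p.2 : ℕ))).erase
          ((0 : Fin (n + 3)), (0 : Fin (n + 2))),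
      (dfactor pa f finv gs ((p.1 : ℕ)) ((p.2 : ℕ)) *
        dfactor pa f finv gs ((p.2 : ℕ) + 1) ((p.1 : ℕ)))) * cochainUnit pa (n + 2) gs =
      cochainUnit pa (n + 2) gs := by
    refine abs_prod pa gs _ _ fun p hp => ?_
    have hmem := Finset.mem_erase.mp hp
    have hne := hmem.1
    have hle : (p.1 : ℕ) ≤ (p.2 : ℕ) := by
      simpa using hmem.2
    have h2 := p.2.isLt
    by_cases hk : (p.1 : ℕ) = 0
    · have hl1 : 1 ≤ (p.2 : ℕ) := by
        rcases Nat.eq_zero_or_pos (p.2 : ℕ) with h0 | h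
        · exact absurd (Prod.ext (Fin.ext (by simp [hk])) (Fin.ext (by simp [h0]))) hne
        · exact h
      rw [hk]
      exact pair_0l pa f finv hmul gs hl1 (by omega)
    · exact pair_kl pa f finv hmul gs (by omega) hle (by omega)
  rw [mul_comm, habs]
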